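/- For every α > 2 and β = (2α+1)/(α−2), there exists h₁ > 0 such that for all h ≥ h₁, all s ∈ [0, 2π/h], and all a ∈ [−π²/(α h³), 0], the characteristic quasipolynomial p(z) = z + 1 + exp(−z h) satisfies |p(a + i s)| ≥ π²/(β h²). -/

import Mathlib

set_option maxHeartbeats 1000000

open Real

private lemma aux_key (α h s a : ℝ) (hα : 2 < α)
    (hh : 2000 + 30*α*(2*α+1)/(α-2) ≤ h)
    (hs0 : 0 ≤ s) (hsh : s*h ≤ 2*π)
    (ha0 : -a*(α*h^3) ≤ π^2) (ha1 : a ≤ 0) :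
    π^2*(α-2) ≤ |s - Real.exp (-(a*h)) * Real.sin (s*h)| * ((2*α+1)*h^2) ∨
    π^2*(α-2) ≤ (a + 1 + Real.exp (-(a*h)) * Real.cos (s*h)) * ((2*α+1)*h^2) := by
  have hπ3 : (3:ℝ) < π := Real.pi_gt_three
  have hπ4 : π < 3.1416 := by
    have := Real.pi_lt_d6
    linarith
  have hπ2 : π^2 < 10 := by nlinarith
  have hπ2' : (9:ℝ) < π^2 := by nlinarith
  have hα0 : (0:ℝ) < α := by linarith
  have hα2 : (0:ℝ) < α - 2 := by linarith
  have h2a1 : (0:ℝ) < 2*α+1 := by linarith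
  have h30 : (0:ℝ) < 30*α*(2*α+1)/(α-2) := by positivity
  have hh0 : (2000:ℝ) ≤ h := by linarith
  have hhp : (0:ℝ) < h := by linarith
  have hh3 : (0:ℝ) < h^3 := by positivity
  have hhα : 30*α*(2*α+1) ≤ (h - 2000)*(α-2) := by
    have h1 : 30*α*(2*α+1)/(α-2) ≤ h - 2000 := by linarith
    have h2 := (div_le_iff₀ hα2).mp h1
    linarith
  obtain ⟨y, hy_def⟩ : ∃ y, y = -(a*h) := ⟨_, rfl⟩
  rw [← hy_def]
  have hy0 : 0 ≤ y := by
    rw [hy_def]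
    have h1 := mul_nonneg (neg_nonneg.2 ha1) hhp.le
    linarith
  have hyb : y * (α*h^2) ≤ π^2 := by
    have h1 : y*(α*h^2) = -a*(α*h^3) := by rw [hy_def]; ring
    rw [h1]; exact ha0
  have hy5 : y * h^2 ≤ 5 := by
    linarith [hyb, hπ2, mul_nonneg (mul_nonneg hy0 (sq_nonneg h)) hα2.le]
  have hy1 : y ≤ 1/100 := by
    linarith [hy5, mul_nonneg hy0
      (show (0:ℝ) ≤ h^2 - 500 by linarith [mul_le_mul hh0 hh0 (by norm_num) hhp.le])]
  obtain ⟨E, hE_def⟩ : ∃ E, E = Real.exp y := ⟨_, rfl⟩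
  rw [← hE_def]
  have hE1 : 1 ≤ E := by rw [hE_def]; exact Real.one_le_exp hy0
  have hEub : E ≤ 1 + y + y^2 := by
    have h1 := Real.exp_bound' hy0 (by linarith) (n := 2) (by norm_num)
    simp [Finset.sum_range_succ] at h1
    rw [hE_def]; linarith [h1, sq_nonneg y]
  have hE2 : E ≤ 2 := by
    linarith [hEub, hy1, hy0, mul_le_mul hy1 hy1 hy0 (by norm_num)]
  have hyh : y*h ≤ 1 := by
    linarith [hy5, mul_nonneg (mul_nonneg hy0 hhp.le) (by linarith : (0:ℝ) ≤ h - 2000)]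
  by_cases him : π^2*(α-2) ≤ |s - E * Real.sin (s*h)| * ((2*α+1)*h^2)
  · exact Or.inl him
  push_neg at him
  right
  have hIm5 : |s - E*Real.sin (s*h)| * h^2 < 5 := by
    have h1 : |s - E*Real.sin (s*h)| * h^2 * (2*α+1) < 5 * (2*α+1) := by
      linarith [him, mul_le_mul_of_nonneg_right hπ2.le hα2.le]
    exact lt_of_mul_lt_mul_right h1 h2a1.le
  have hImU : (s - E*Real.sin (s*h)) * h^2 < 5 := by
    have h1 := mul_le_mul_of_nonneg_right (le_abs_self (s - E*Real.sin (s*h))) (sq_nonneg h)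
    linarith
  have hImL : -5 < (s - E*Real.sin (s*h)) * h^2 := by
    have h1 := mul_le_mul_of_nonneg_right (neg_abs_le (s - E*Real.sin (s*h))) (sq_nonneg h)
    linarith [h1, hIm5]
  by_cases hcos : 0 ≤ Real.cos (s*h)
  · -- real part is close to 2: easy
    have hEc : 0 ≤ E * Real.cos (s*h) := mul_nonneg (by linarith) hcos
    have hah3 : -a*h^3 ≤ 5 := by
      linarith [ha0, hπ2, mul_nonneg (mul_nonneg (neg_nonneg.2 ha1) hh3.le) hα2.le]
    have haq : -a*h^2 ≤ 1 := by
      linarith [hah3, mul_nonneg (mul_nonneg (neg_nonneg.2 ha1) (sq_nonneg h))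
        (by linarith : (0:ℝ) ≤ h - 2000)]
    have hhsq : (2000:ℝ)^2 ≤ h^2 := by
      linarith [mul_le_mul hh0 hh0 (by norm_num) hhp.le]
    have k1 : (1:ℝ)/2 ≤ a + 1 + E*Real.cos (s*h) := by
      linarith [hEc, haq, mul_nonneg (neg_nonneg.2 ha1) (show (0:ℝ) ≤ h^2 - 2000^2 by linarith)]
    have k2 := mul_le_mul_of_nonneg_right k1 (by positivity : (0:ℝ) ≤ (2*α+1)*h^2)
    have k3 : π^2*(α-2) ≤ 1/2*((2*α+1)*h^2) := by
      linarith [mul_le_mul_of_nonneg_right hπ2.le hα2.le,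
        mul_nonneg h2a1.le (show (0:ℝ) ≤ h^2 - 2000^2 by linarith)]
    linarith
  push_neg at hcos
  have hx0 : 0 ≤ s*h := mul_nonneg hs0 hhp.le
  have hxl : π/2 < s*h := by
    by_contra hc
    push_neg at hc
    exact absurd (Real.cos_nonneg_of_mem_Icc ⟨by linarith, hc⟩) (not_le.2 hcos)
  have hxr : s*h < 3*π/2 := by
    by_contra hc
    push_neg at hc
    have h2 : Real.cos (s*h - 2*π) = Real.cos (s*h) := Real.cos_sub_two_pi (s*h)
    have h3 : 0 ≤ Real.cos (s*h) := by
      rw [← h2]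
      exact Real.cos_nonneg_of_mem_Icc ⟨by linarith, by linarith⟩
    linarith
  obtain ⟨u, hu_def⟩ : ∃ u, u = π - s*h := ⟨_, rfl⟩
  have hxu : s*h = π - u := by rw [hu_def]; ring
  have hu2π : u < π/2 := by rw [hu_def]; linarith
  have hu2π' : -(π/2) < u := by rw [hu_def]; linarith
  have hsinx : Real.sin (s*h) = Real.sin u := by rw [hxu, Real.sin_pi_sub]
  have hcosx : Real.cos (s*h) = -Real.cos u := by rw [hxu, Real.cos_pi_sub]
  have hsh2 : s*h^2 = (π - u)*h := by
    have : s*(h*h) = (s*h)*h := by ring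
    calc s*h^2 = (s*h)*h := by ring
    _ = (π - u)*h := by rw [hxu]
  rw [hsinx] at hImU hImL
  have hsinu_pos : 0 < Real.sin u := by
    by_contra hc
    push_neg at hc
    have h1 : E * Real.sin u ≤ 0 := mul_nonpos_of_nonneg_of_nonpos (by linarith) hc
    linarith [hImU, hsh2, mul_le_mul_of_nonneg_right h1 (sq_nonneg h),
      mul_nonneg (show (0:ℝ) ≤ π - u - π/2 by linarith) hhp.le,
      mul_nonneg (show (0:ℝ) ≤ π - 3 by linarith) hhp.le, hh0]
  have hu_pos : 0 < u := by
    by_contra hc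
    push_neg at hc
    have h1 : Real.sin (-u) ≥ 0 := Real.sin_nonneg_of_nonneg_of_le_pi (by linarith) (by linarith)
    rw [Real.sin_neg] at h1
    linarith
  have hmls : 2*u ≤ π * Real.sin u := by
    have h1 := Real.mul_le_sin hu_pos.le hu2π.le
    have h3 := mul_le_mul_of_nonneg_left h1 (by linarith : (0:ℝ) ≤ π)
    have h2 : π*(2/π*u) = 2*u := by field_simp
    rw [h2] at h3
    exact h3
  have hEsinb : E * Real.sin u * h^2 < π*h + 5 := by
    linarith [hImL, hsh2, mul_nonneg hu_pos.le hhp.le]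
  have hsinb : Real.sin u * h^2 < π*h + 5 := by
    linarith [hEsinb,
      mul_nonneg (mul_nonneg (by linarith : (0:ℝ) ≤ E - 1) hsinu_pos.le) (sq_nonneg h)]
  have huh : u*h ≤ 11 := by
    have h1 : 2*u*h^2 ≤ π * (Real.sin u * h^2) := by
      linarith [mul_le_mul_of_nonneg_right hmls (sq_nonneg h)]
    have h2 : π * (Real.sin u * h^2) ≤ π*(π*h + 5) :=
      mul_le_mul_of_nonneg_left hsinb.le (by linarith)
    have h3 : u*h*h ≤ 11*h := by
      linarith [h1, h2, mul_nonneg (show (0:ℝ) ≤ 10 - π^2 by linarith) hhp.le, hh0]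
    exact le_of_mul_le_mul_right h3 hhp
  have hu1 : u ≤ 1/100 := by
    linarith [huh, mul_nonneg hu_pos.le (by linarith : (0:ℝ) ≤ h - 2000)]
  have hs9' : π*h - 17 ≤ u*h^2 := by
    have hsl : Real.sin u ≤ u := Real.sin_le hu_pos.le
    have h1 : E * Real.sin u * h^2 ≤ E * u * h^2 := by
      linarith [mul_le_mul_of_nonneg_right
        (mul_le_mul_of_nonneg_left hsl (by linarith : (0:ℝ) ≤ E)) (sq_nonneg h)]
    have h2 : E * u * h^2 ≤ u*h^2 + 1 := by
      linarith [mul_le_mul_of_nonneg_right hEub (mul_nonneg hu_pos.le (sq_nonneg h)),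
        mul_le_mul hy5 hu1 hu_pos.le (by norm_num),
        mul_le_mul (mul_le_mul hy1 hy5 (mul_nonneg hy0 (sq_nonneg h)) (by norm_num)) hu1
          hu_pos.le (by norm_num)]
    linarith [hImU, hsh2, h1, h2, huh]
  have hs9 : π^2*h - 107 ≤ u^2*h^3 := by
    have h0 : 0 ≤ π*h - 17 := by
      linarith [mul_nonneg (show (0:ℝ) ≤ π - 3 by linarith) hhp.le, hh0]
    have h1 : (π*h - 17)^2 ≤ (u*h^2)^2 := by
      have h4 := pow_le_pow_left₀ h0 hs9' 2
      linarith [h4]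
    have h2 : (π^2*h - 107)*h ≤ u^2*h^3*h := by
      linarith [h1, mul_nonneg (show (0:ℝ) ≤ 107 - 34*π by linarith) hhp.le]
    exact le_of_mul_le_mul_right h2 hhp
  have hu4 : u^4*h^3 ≤ 8 := by
    have h1 : (u*h)^4 ≤ 11^4 := pow_le_pow_left₀ (mul_nonneg hu_pos.le hhp.le) huh 4
    have h1' : u^4*h^4 ≤ 14641 := by
      have h4 : (u*h)^4 = u^4*h^4 := by ring
      rw [h4] at h1; norm_num at h1; linarith
    have h2 : u^4*h^3*h ≤ 8*h := by linarith [h1', hh0]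
    exact le_of_mul_le_mul_right h2 hhp
  have hcb : Real.cos u ≤ 1 - u^2/2 + u^4*(5/96) := by
    have h1 := Real.cos_bound (x := u) (by rw [abs_of_nonneg hu_pos.le]; linarith)
    have h2 := (abs_le.mp h1).2
    rw [abs_of_nonneg hu_pos.le] at h2
    linarith
  have s4 : E*u^4*h^3 ≤ 16 := by
    linarith [mul_le_mul hE2 hu4 (mul_nonneg (pow_nonneg hu_pos.le 4) hh3.le) (by norm_num)]
  have s10 : E*Real.cos u*h^3 ≤ E*h^3 - u^2*h^3/2 + 1 := by
    have h1 : E*Real.cos u ≤ E*(1 - u^2/2 + u^4*(5/96)) :=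
      mul_le_mul_of_nonneg_left hcb (by linarith)
    have h2 : E*Real.cos u*h^3 ≤ E*(1 - u^2/2 + u^4*(5/96))*h^3 :=
      mul_le_mul_of_nonneg_right h1 hh3.le
    have h3 : (E-1)*u^2*h^3 ≥ 0 :=
      mul_nonneg (mul_nonneg (by linarith) (sq_nonneg u)) hh3.le
    linarith [h2, h3, s4]
  have s6 : (E-1)*h^3 ≤ y*h^3 + 5 := by
    have h1 : y^2*h^3 ≤ 5 := by
      linarith [mul_le_mul hyh hy5 (mul_nonneg hy0 (sq_nonneg h)) (by norm_num)]
    linarith [mul_le_mul_of_nonneg_right hEub hh3.le, h1]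
  have s7 : y*h^3*α ≤ π^2*h := by
    linarith [mul_le_mul_of_nonneg_right hyb hhp.le]
  have s8 : -a*h^3 ≤ 5 := by
    linarith [ha0, hπ2, mul_nonneg (mul_nonneg (neg_nonneg.2 ha1) hh3.le) hα2.le]
  have RE3 : π^2*h/2 - y*h^3 - 70 ≤ (a + 1 - E*Real.cos u)*h^3 := by
    linarith [s10, s6, s8, hs9]
  have m1 : (π^2*h/2 - y*h^3 - 70)*((2*α+1)*α) ≤ (a + 1 - E*Real.cos u)*h^3*((2*α+1)*α) :=
    mul_le_mul_of_nonneg_right RE3 (by positivity)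
  have m2 : y*h^3*(α*(2*α+1)) ≤ π^2*h*(2*α+1) := by
    linarith [mul_le_mul_of_nonneg_right s7 h2a1.le]
  have hX : (0:ℝ) ≤ (h-2000)*(α-2) := le_trans (by positivity) hhα
  have m3 : 9*((h-2000)*(α-2)) ≤ π^2*((h-2000)*(α-2)) :=
    mul_le_mul_of_nonneg_right hπ2'.le hX
  have hsign1 : (0:ℝ) ≤ π^2*(α-2) := by positivity
  have hsign2 : (0:ℝ) ≤ α*(2*α+1) := by positivity
  have hgoal : π^2*(α-2)*(h*α) ≤ ((a + 1 - E*Real.cos u)*((2*α+1)*h^2))*(h*α) := by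
    linarith [m1, m2, m3, hhα, hsign1, hsign2]
  rw [hcosx]
  have hpos : (0:ℝ) < h*α := by positivity
  refine le_of_mul_le_mul_right ?_ hpos
  linarith [hgoal]

open Complex in
theorem stmt_6 (α : ℝ) (hα : 2 < α) (β : ℝ) (hβ : β = (2 * α + 1) / (α - 2)) :
    ∃ h₁ > (0:ℝ), ∀ h ≥ h₁, ∀ s ∈ Set.Icc (0:ℝ) (2 * Real.pi / h),
      ∀ a ∈ Set.Icc (-Real.pi^2 / (α * h^3)) (0:ℝ),
        ‖(a + s * I) + 1 + Complex.exp (-(a + s * I) * h)‖ ≥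
          Real.pi^2 / (β * h^2) := by
  have hα2 : (0:ℝ) < α - 2 := by linarith
  have hα0 : (0:ℝ) < α := by linarith
  refine ⟨2000 + 30*α*(2*α+1)/(α-2), by positivity, ?_⟩
  intro h hh s hs a ha
  have h30 : (0:ℝ) < 30*α*(2*α+1)/(α-2) := by positivity
  have hhp : (0:ℝ) < h := by linarith
  have hsh : s*h ≤ 2*π := by
    have h1 := mul_le_mul_of_nonneg_right hs.2 hhp.le
    rwa [div_mul_cancel₀ _ (ne_of_gt hhp)] at h1
  have ha0 : -a*(α*h^3) ≤ π^2 := by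
    have h1 := ha.1
    rw [neg_div, neg_le] at h1
    have h2 : -a ≤ π^2 / (α*h^3) := h1
    rw [le_div_iff₀ (by positivity)] at h2
    linarith
  have key := aux_key α h s a hα hh hs.1 hsh ha0 ha.2
  have hre : ((a:ℂ) + s*Complex.I + 1 + Complex.exp (-(a + s*Complex.I)*h)).re
      = a + 1 + Real.exp (-(a*h)) * Real.cos (s*h) := by
    simp [Complex.exp_re, Complex.add_re, Complex.add_im, Complex.mul_re, Complex.mul_im]
  have him : ((a:ℂ) + s*Complex.I + 1 + Complex.exp (-(a + s*Complex.I)*h)).im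
      = s - Real.exp (-(a*h)) * Real.sin (s*h) := by
    simp [Complex.exp_im, Complex.add_re, Complex.add_im, Complex.mul_re, Complex.mul_im]
    ring
  have hbound : π^2 / (β*h^2) = π^2*(α-2) / ((2*α+1)*h^2) := by
    rw [hβ]; field_simp
  rw [ge_iff_le, hbound, div_le_iff₀ (by positivity)]
  rcases key with hk | hk
  · calc π^2*(α-2) ≤ |s - Real.exp (-(a*h)) * Real.sin (s*h)| * ((2*α+1)*h^2) := hk
    _ ≤ ‖(a + s*Complex.I) + 1 + Complex.exp (-(a + s*Complex.I)*h)‖ * ((2*α+1)*h^2) := by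
        refine mul_le_mul_of_nonneg_right ?_ (by positivity)
        rw [← him]
        exact Complex.abs_im_le_norm _
  · calc π^2*(α-2) ≤ (a + 1 + Real.exp (-(a*h)) * Real.cos (s*h)) * ((2*α+1)*h^2) := hk
    _ ≤ ‖(a + s*Complex.I) + 1 + Complex.exp (-(a + s*Complex.I)*h)‖ * ((2*α+1)*h^2) := by
        refine mul_le_mul_of_nonneg_right ?_ (by positivity)
        rw [← hre]
        exact le_trans (le_abs_self _) (Complex.abs_re_le_norm _)
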